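/- Let K be a Henselian discrete valuation field of characteristic p > 0. Then for every m ≥ 1 and n ≥ 0, the subgroup fil_n H¹_ét(K, ℤ/p^m) equals the intersection H¹_ét(K, ℤ/p^m) ∩ fil_n H¹_ét(K, ℚ_p/ℤ_p), and also equals the p^m-torsion subgroup of fil_n H¹_ét(K, ℚ_p/ℤ_p). -/

import Mathlib

open Multiplicative

/-! Artin–Schreier–Witt model of `H¹_ét(K, ℤ/p^m)` and `H¹_ét(K, ℚ_p/ℤ_p)` for a field `K`
of characteristic `p`: `H¹_ét(K, ℤ/p^m) ≅ W_m(K)/(1-F̄) ≅ W(K)/((1-F̄)W(K) + V^m W(K))`,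
and `H¹_ét(K, ℚ_p/ℤ_p)` is the direct limit of these along the maps induced by the
Verschiebung (corresponding to `ℤ/p^m ↪ ℤ/p^{m'}`).  Kato's filtration `fil_n` is the
image of `fil_n W_m(K) = {(a_{m-1},…,a_0) : p^i v_K(a_i) ≥ -n}`. -/

variable (p : ℕ) [hp : Fact p.Prime] (K : Type*) [CommRing K] [CharP K p]

/-- The additive endomorphism `1 - F̄` of `W(K)`, where `F̄` raises every component to the
`p`-th power. -/
noncomputable def oneSubF : WittVector p K →+ WittVector p K :=
  AddMonoidHom.id (WittVector p K) - (WittVector.map (frobenius K p)).toAddMonoidHom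

/-- Iterated Verschiebung `V^k` on `W(K)`. -/
noncomputable def Vpow : ℕ → (WittVector p K →+ WittVector p K)
  | 0 => AddMonoidHom.id _
  | k + 1 => (WittVector.verschiebung).comp (Vpow k)

lemma oneSubF_apply (x : WittVector p K) :
    oneSubF p K x = x - WittVector.map (frobenius K p) x := rfl

lemma Vpow_Vpow (a b : ℕ) (x : WittVector p K) :
    Vpow p K a (Vpow p K b x) = Vpow p K (a + b) x := by
  induction a with
  | zero => rw [Nat.zero_add]; rfl
  | succ a ih =>
      rw [Nat.succ_add]
      show WittVector.verschiebung (Vpow p K a (Vpow p K b x)) =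
        WittVector.verschiebung (Vpow p K (a + b) x)
      rw [ih]

lemma Vpow_oneSubF (k : ℕ) (x : WittVector p K) :
    Vpow p K k (oneSubF p K x) = oneSubF p K (Vpow p K k x) := by
  induction k with
  | zero => rfl
  | succ k ih =>
      show WittVector.verschiebung (Vpow p K k (oneSubF p K x)) =
        oneSubF p K (WittVector.verschiebung (Vpow p K k x))
      rw [ih]
      rw [oneSubF_apply, oneSubF_apply, map_sub, WittVector.map_verschiebung]

/-- The subgroup `(1-F̄)W(K) + V^m W(K)` of `W(K)`, so that
`Q_m := W(K)/S_m ≅ W_m(K)/(1-F̄) ≅ H¹_ét(Spec K, ℤ/p^m)`. -/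
noncomputable def Sgrp (m : ℕ) : AddSubgroup (WittVector p K) :=
  (oneSubF p K).range ⊔ (Vpow p K m).range

/-- `Q_m = W(K)/((1-F̄)W(K) + V^m W(K))`, the Artin–Schreier–Witt model of
`H¹_ét(Spec K, ℤ/p^m)`. -/
noncomputable def Qgrp (m : ℕ) : Type _ := WittVector p K ⧸ Sgrp p K m

noncomputable instance (m : ℕ) : AddCommGroup (Qgrp p K m) :=
  inferInstanceAs (AddCommGroup (WittVector p K ⧸ Sgrp p K m))

lemma Sgrp_le_comap (m k : ℕ) :
    Sgrp p K m ≤ (Sgrp p K (k + m)).comap (Vpow p K k) := by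
  show (oneSubF p K).range ⊔ (Vpow p K m).range ≤ _
  refine sup_le ?_ ?_
  · rintro x hx
    obtain ⟨y, rfl⟩ := hx
    refine AddSubgroup.mem_comap.2 ?_
    show Vpow p K k (oneSubF p K y) ∈ (oneSubF p K).range ⊔ (Vpow p K (k + m)).range
    exact AddSubgroup.mem_sup_left ⟨Vpow p K k y, (Vpow_oneSubF p K k y).symm⟩
  · rintro x hx
    obtain ⟨y, rfl⟩ := hx
    refine AddSubgroup.mem_comap.2 ?_
    show Vpow p K k (Vpow p K m y) ∈ (oneSubF p K).range ⊔ (Vpow p K (k + m)).range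
    exact AddSubgroup.mem_sup_right ⟨y, (Vpow_Vpow p K k m y).symm⟩

/-- The transition map `Q_m → Q_{m'}` (for `m ≤ m'`) induced by `V^{m'-m}`; it corresponds
to the map `H¹(−, ℤ/p^m) → H¹(−, ℤ/p^{m'})` coming from `ℤ/p^m ↪ ℤ/p^{m'}`. -/
noncomputable def transQ (m m' : ℕ) (h : m ≤ m') : Qgrp p K m →+ Qgrp p K m' :=
  QuotientAddGroup.map _ _ (Vpow p K (m' - m))
    (by have := Sgrp_le_comap p K m (m' - m)
        rwa [Nat.sub_add_cancel h] at this)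

/-- The Artin–Schreier–Witt model of the `p`-primary part of `H¹_ét(Spec K, ℚ/ℤ)`:
the direct limit `colim_m Q_m`. -/
noncomputable def Hoo : Type _ := AddCommGroup.DirectLimit (Qgrp p K) (transQ p K)

noncomputable instance : AddCommGroup (Hoo p K) :=
  inferInstanceAs (AddCommGroup (AddCommGroup.DirectLimit (Qgrp p K) (transQ p K)))

variable (v : Valuation K (WithZero (Multiplicative ℤ)))

/-- Kato's filtration `fil_n W_m(K)` pulled back to `W(K)`: the condition
`p^i v_K(a_i) ≥ -n` on the first `m` coordinates (where the coordinate of index `j`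
is `a_{m-1-j}`). -/
def filW (m n : ℕ) : Set (WittVector p K) :=
  {x | ∀ j : ℕ, j < m →
    (v (x.coeff j)) ^ (p ^ (m - 1 - j)) ≤
      ((ofAdd (n : ℤ) : Multiplicative ℤ) : WithZero (Multiplicative ℤ))}

/-- `fil_n H¹_ét(K, ℤ/p^m)`: the image of `fil_n W_m(K)` under the
Artin–Schreier–Witt boundary map `∂_m : W_m(K) → H¹_ét(K, ℤ/p^m) = Q_m`. -/
def filQ (m n : ℕ) : Set (Qgrp p K m) :=
  {c | ∃ x ∈ filW p K v m n, (QuotientAddGroup.mk x : Qgrp p K m) = c}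

/-- `fil_n H¹_ét(K, ℚ_p/ℤ_p) = ⋃_m fil_n H¹_ét(K, ℤ/p^m)` inside the direct limit. -/
def filH (n : ℕ) : Set (Hoo p K) :=
  {c | ∃ (m : ℕ) (d : Qgrp p K m), d ∈ filQ p K v m n ∧
    AddCommGroup.DirectLimit.of (Qgrp p K) (transQ p K) m d = c}


section Aux
set_option linter.unusedSectionVars false
open WittVector

lemma versch_inj : Function.Injective (WittVector.verschiebung : WittVector p K → WittVector p K) := by
  intro a b h
  ext i
  have := congrArg (fun z : WittVector p K => z.coeff (i + 1)) h
  simpa only [WittVector.verschiebung_coeff_succ] using this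

lemma exists_versch {x : WittVector p K} (h : x.coeff 0 = 0) :
    ∃ y : WittVector p K, WittVector.verschiebung y = x := by
  refine ⟨WittVector.mk p fun i => x.coeff (i + 1), ?_⟩
  ext i
  cases i with
  | zero => rw [WittVector.verschiebung_coeff_zero, h]
  | succ i => rw [WittVector.verschiebung_coeff_succ, WittVector.coeff_mk]

lemma Vpow_succ_apply (k : ℕ) (x : WittVector p K) :
    Vpow p K (k + 1) x = WittVector.verschiebung (Vpow p K k x) := rfl

lemma Vpow_coeff (k : ℕ) (x : WittVector p K) (j : ℕ) :
    (Vpow p K k x).coeff j = if j < k then 0 else x.coeff (j - k) := by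
  induction k generalizing j with
  | zero => simp [Vpow]
  | succ k ih =>
      rw [Vpow_succ_apply]
      cases j with
      | zero => simp [WittVector.verschiebung_coeff_zero]
      | succ j =>
          rw [WittVector.verschiebung_coeff_succ, ih]
          simp only [Nat.succ_sub_succ]
          congr 1
          simp [Nat.succ_lt_succ_iff]

lemma Vpow_inj (k : ℕ) : Function.Injective (Vpow p K k) := by
  induction k with
  | zero => exact fun a b h => h
  | succ k ih =>
      intro a b h
      rw [Vpow_succ_apply, Vpow_succ_apply] at h
      exact ih (versch_inj p K h)

lemma oneSubF_coeff_zero (w : WittVector p K) :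
    (oneSubF p K w).coeff 0 = w.coeff 0 - w.coeff 0 ^ p := by
  rw [oneSubF_apply]
  have := map_sub (WittVector.constantCoeff (p := p) (R := K)) w (WittVector.map (frobenius K p) w)
  simpa only [WittVector.constantCoeff_apply, WittVector.map_coeff, frobenius_def] using this

lemma add_coeff_zero' (a b : WittVector p K) : (a + b).coeff 0 = a.coeff 0 + b.coeff 0 :=
  WittVector.add_coeff_zero a b

lemma p_smul (x : WittVector p K) :
    p • x = WittVector.verschiebung (WittVector.map (frobenius K p) x) := by
  rw [← WittVector.frobenius_eq_map_frobenius, WittVector.verschiebung_frobenius,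
    mul_comm, ← nsmul_eq_mul]

open Finset in
lemma teichmuller_mul_coeff {p : ℕ} [hp : Fact p.Prime] {R : Type*} [CommRing R]
    (c : R) (x : WittVector p R) (i : ℕ) :
    (WittVector.teichmuller p c * x).coeff i = c ^ p ^ i * x.coeff i := by
  have key : ∀ (z : WittVector p (MvPolynomial (Option ℕ) ℤ)),
      WittVector.teichmuller p (MvPolynomial.X none) * z
        = WittVector.mk p (fun j => (MvPolynomial.X none) ^ p ^ j * z.coeff j) := by
    intro z
    set B := MvPolynomial (Option ℕ) ℚ
    have hg : Function.Injective (MvPolynomial.map (Int.castRingHom ℚ) :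
        MvPolynomial (Option ℕ) ℤ →+* B) := MvPolynomial.map_injective _ Int.cast_injective
    apply WittVector.map_injective _ hg
    haveI : Invertible (p : ℚ) :=
      invertibleOfNonzero (by exact_mod_cast hp.out.ne_zero)
    haveI : Invertible (p : B) := Invertible.map (algebraMap ℚ B) (p : ℚ)
    apply (WittVector.ghostMap.bijective_of_invertible p B).injective
    funext n
    rw [WittVector.ghostMap_apply, WittVector.ghostMap_apply,
      map_mul (WittVector.map (MvPolynomial.map (Int.castRingHom ℚ))),
      WittVector.map_teichmuller]
    rw [map_mul (WittVector.ghostComponent n), WittVector.ghostComponent_teichmuller,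
      WittVector.ghostComponent_apply, WittVector.ghostComponent_apply,
      aeval_wittPolynomial, aeval_wittPolynomial, mul_sum]
    apply Finset.sum_congr rfl
    intro j hj
    rw [Finset.mem_range, Nat.lt_succ_iff] at hj
    simp only [WittVector.map_coeff, WittVector.coeff_mk, map_mul, map_pow]
    rw [mul_pow, ← pow_mul,
      show p ^ j * p ^ (n - j) = p ^ n by rw [← pow_add, Nat.add_sub_cancel' hj]]
    ring
  set φ := (MvPolynomial.aeval (fun o : Option ℕ => o.elim c x.coeff) :
      MvPolynomial (Option ℕ) ℤ →ₐ[ℤ] R).toRingHom with hφ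
  have hz : WittVector.map φ (WittVector.mk p
      (fun j => MvPolynomial.X (σ := Option ℕ) (R := ℤ) (some j))) = x := by
    ext j
    simp [WittVector.map_coeff, WittVector.coeff_mk, hφ]
  have h2 := congrArg (WittVector.map φ) (key (WittVector.mk p (fun j => MvPolynomial.X (some j))))
  rw [map_mul, WittVector.map_teichmuller, hz] at h2
  have h3 : φ (MvPolynomial.X none) = c := by simp [hφ]
  rw [h3] at h2
  have h4 := congrArg (fun w : WittVector p R => w.coeff i) h2
  simp only [WittVector.map_coeff, WittVector.coeff_mk, map_mul, map_pow, h3] at h4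
  rw [h4]
  simp [hφ]


lemma oneSubF_teichmuller (a : K) :
    oneSubF p K (WittVector.teichmuller p a) =
      WittVector.teichmuller p a - WittVector.teichmuller p (a ^ p) := by
  rw [oneSubF_apply, WittVector.map_teichmuller, frobenius_def]

lemma oneSubF_versch (x : WittVector p K) :
    oneSubF p K (WittVector.verschiebung x) = WittVector.verschiebung (oneSubF p K x) := by
  have := Vpow_oneSubF p K 1 x
  rw [Vpow_succ_apply, Vpow_succ_apply] at this
  exact this.symm

lemma pow_p_smul_sub_mem (j : ℕ) (x : WittVector p K) :
    p ^ j • x - Vpow p K j x ∈ (oneSubF p K).range := by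
  induction j generalizing x with
  | zero =>
      have h0 : p ^ 0 • x - Vpow p K 0 x = 0 := by
        show p ^ 0 • x - x = 0
        rw [pow_zero, one_smul, sub_self]
      rw [h0]
      exact AddSubgroup.zero_mem _
  | succ j ih =>
      obtain ⟨w, hw⟩ := ih x
      refine ⟨WittVector.verschiebung w - WittVector.verschiebung (p ^ j • x), ?_⟩
      have e1 : p ^ (j + 1) • x =
          WittVector.verschiebung (WittVector.map (frobenius K p) (p ^ j • x)) := by
        rw [pow_succ', mul_smul, p_smul]
      rw [map_sub (oneSubF p K), oneSubF_versch, oneSubF_versch, hw, e1, Vpow_succ_apply,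
        oneSubF_apply p K (p ^ j • x)]
      simp only [map_sub]
      abel

lemma sub_teichmuller_coeff_zero (w : WittVector p K) :
    (w - WittVector.teichmuller p (w.coeff 0)).coeff 0 = 0 := by
  have := map_sub (WittVector.constantCoeff (p := p) (R := K)) w
    (WittVector.teichmuller p (w.coeff 0))
  simpa only [WittVector.constantCoeff_apply, WittVector.teichmuller_coeff_zero, sub_self]
    using this

lemma oneSubF_eq_Vpow (k : ℕ) :
    ∀ w s : WittVector p K, oneSubF p K w = Vpow p K k s →
      ∃ w' : WittVector p K, oneSubF p K w = oneSubF p K (Vpow p K k w') := by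
  induction k with
  | zero => exact fun w s _ => ⟨w, rfl⟩
  | succ k ih =>
      intro w s h
      have h0 : w.coeff 0 - w.coeff 0 ^ p = 0 := by
        have := congrArg (fun z : WittVector p K => z.coeff 0) h
        rw [Vpow_succ_apply] at this
        simpa only [oneSubF_coeff_zero, WittVector.verschiebung_coeff_zero] using this
      have hap : w.coeff 0 ^ p = w.coeff 0 := (sub_eq_zero.mp h0).symm
      obtain ⟨w₁, hw₁⟩ := exists_versch p K (sub_teichmuller_coeff_zero p K w)
      have hw : w = WittVector.teichmuller p (w.coeff 0) + WittVector.verschiebung w₁ := by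
        rw [hw₁]; abel
      have hsplit : oneSubF p K w = WittVector.verschiebung (oneSubF p K w₁) := by
        rw [hw, map_add (oneSubF p K), oneSubF_teichmuller, hap, sub_self, zero_add,
          oneSubF_versch]
      have hVeq : WittVector.verschiebung (oneSubF p K w₁) =
          WittVector.verschiebung (Vpow p K k s) := by
        rw [← hsplit, h, Vpow_succ_apply]
      obtain ⟨w', hw'⟩ := ih w₁ s (versch_inj p K hVeq)
      refine ⟨w', ?_⟩
      rw [hsplit, hw', ← oneSubF_versch]
      rfl


lemma mem_Sgrp_oneSubF (m : ℕ) (w : WittVector p K) : oneSubF p K w ∈ Sgrp p K m :=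
  AddSubgroup.mem_sup_left ⟨w, rfl⟩

lemma mem_Sgrp_Vpow (m : ℕ) (t : WittVector p K) : Vpow p K m t ∈ Sgrp p K m :=
  AddSubgroup.mem_sup_right ⟨t, rfl⟩

lemma Sgrp_cases {m : ℕ} {x : WittVector p K} (h : x ∈ Sgrp p K m) :
    ∃ w t : WittVector p K, x = oneSubF p K w + Vpow p K m t := by
  obtain ⟨a, ha, b, hb, hab⟩ := AddSubgroup.mem_sup.1 h
  obtain ⟨w, rfl⟩ := ha
  obtain ⟨t, rfl⟩ := hb
  exact ⟨w, t, hab.symm⟩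

end Aux

section Val
set_option linter.unusedSectionVars false
variable {p : ℕ} [hp : Fact p.Prime] {L : Type*} [Field L] [CharP L p]
  (v : Valuation L (WithZero (Multiplicative ℤ))) (n : ℕ)

local notation "N" => ((ofAdd (n : ℤ) : Multiplicative ℤ) : WithZero (Multiplicative ℤ))

lemma one_le_N : (1 : WithZero (Multiplicative ℤ)) ≤ N := by
  rw [show (1 : WithZero (Multiplicative ℤ)) = ((ofAdd (0 : ℤ) : Multiplicative ℤ) :
    WithZero (Multiplicative ℤ)) from rfl, WithZero.coe_le_coe, Multiplicative.ofAdd_le]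
  exact Int.ofNat_nonneg n

lemma bound_of_le_one {a : L} (h : v a ≤ 1) (e : ℕ) : v a ^ e ≤ N :=
  (pow_le_one₀ zero_le' h).trans (one_le_N n)

lemma exp_mono {a : L} {e f : ℕ} (hef : e ≤ f) (h : v a ^ f ≤ N) : v a ^ e ≤ N := by
  rcases le_or_gt (v a) 1 with h1 | h1
  · exact bound_of_le_one v n h1 e
  · exact (pow_le_pow_right₀ h1.le hef).trans h

lemma filW_antitone {m M : ℕ} (hmM : m ≤ M) : filW p L v M n ⊆ filW p L v m n := by
  intro x hx j hj
  exact exp_mono v n (Nat.pow_le_pow_right hp.out.one_lt.le (by omega))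
    (hx j (lt_of_lt_of_le hj hmM))

lemma filW_Vpow {m : ℕ} (k : ℕ) {x : WittVector p L} (hx : x ∈ filW p L v m n) :
    Vpow p L k x ∈ filW p L v (m + k) n := by
  intro j hj
  rw [Vpow_coeff]
  split_ifs with h
  · rw [Valuation.map_zero, zero_pow (pow_ne_zero _ hp.out.ne_zero)]
    exact zero_le'
  · push_neg at h
    have h2 : j - k < m := by omega
    have h3 : m + k - 1 - j = m - 1 - (j - k) := by omega
    rw [h3]
    exact hx (j - k) h2

lemma filW_AS {a : L} {e : ℕ} (h : v (a ^ p - a) ^ p ^ e ≤ N) :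
    v a ^ p ^ e ≤ N ∧ v (a ^ p) ^ p ^ e ≤ N := by
  rcases le_or_gt (v a) 1 with h1 | h1
  · refine ⟨bound_of_le_one v n h1 _, bound_of_le_one v n ?_ _⟩
    rw [map_pow]
    exact pow_le_one₀ zero_le' h1
  · have hlt : v a < v (a ^ p) := by
      rw [map_pow]
      calc v a = v a ^ 1 := (pow_one _).symm
      _ < v a ^ p := pow_lt_pow_right₀ h1 hp.out.one_lt
    have heq : v (a ^ p - a) = v (a ^ p) := Valuation.map_sub_eq_of_lt_left _ hlt
    rw [heq] at h
    refine ⟨?_, h⟩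
    calc v a ^ p ^ e ≤ v (a ^ p) ^ p ^ e := pow_le_pow_left₀ zero_le' hlt.le _
    _ ≤ N := h

lemma teichmuller_mem_filW {a : L} {M : ℕ} (h : v a ^ p ^ (M - 1) ≤ N) :
    WittVector.teichmuller p a ∈ filW p L v M n := by
  intro j hj
  cases j with
  | zero => simpa using h
  | succ j =>
      rw [WittVector.teichmuller_coeff_pos p a _ (Nat.succ_pos j), Valuation.map_zero,
        zero_pow (pow_ne_zero _ hp.out.ne_zero)]
      exact zero_le'

lemma mem_filW_iff {c : L} (hc : v c = ((ofAdd (-(n : ℤ)) : Multiplicative ℤ) :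
    WithZero (Multiplicative ℤ))) {M : ℕ} (x : WittVector p L) :
    x ∈ filW p L v M n ↔ ∀ j < M, v (c ^ p ^ j * x.coeff j ^ p ^ (M - 1)) ≤ 1 := by
  have key : ∀ j, j < M → (v (x.coeff j) ^ p ^ (M - 1 - j) ≤ N ↔
      v (c ^ p ^ j * x.coeff j ^ p ^ (M - 1)) ≤ 1) := by
    intro j hj
    rw [map_mul, map_pow, map_pow, hc]
    have hsplit : p ^ (M - 1) = p ^ (M - 1 - j) * p ^ j := by
      rw [← pow_add]
      congr 1
      omega
    rw [hsplit, pow_mul]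
    rw [show ((ofAdd (-(n : ℤ)) : Multiplicative ℤ) : WithZero (Multiplicative ℤ)) ^ p ^ j *
          (v (x.coeff j) ^ p ^ (M - 1 - j)) ^ p ^ j
        = (((ofAdd (-(n : ℤ)) : Multiplicative ℤ) : WithZero (Multiplicative ℤ)) *
          v (x.coeff j) ^ p ^ (M - 1 - j)) ^ p ^ j from (mul_pow _ _ _).symm]
    rw [show (1 : WithZero (Multiplicative ℤ)) = 1 ^ p ^ j from (one_pow _).symm]
    rw [pow_le_pow_iff_left₀ zero_le' zero_le' (pow_ne_zero _ hp.out.ne_zero)]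
    constructor
    · intro h
      calc ((ofAdd (-(n : ℤ)) : Multiplicative ℤ) : WithZero (Multiplicative ℤ)) *
            v (x.coeff j) ^ p ^ (M - 1 - j)
          ≤ ((ofAdd (-(n : ℤ)) : Multiplicative ℤ) : WithZero (Multiplicative ℤ)) * N := by
            exact mul_le_mul_right h _
      _ = 1 := by
            rw [← WithZero.coe_mul, ← ofAdd_add, neg_add_cancel]
            rfl
    · intro h
      have := mul_le_mul_right h ((ofAdd ((n : ℤ)) : Multiplicative ℤ) :
        WithZero (Multiplicative ℤ))
      rw [← mul_assoc, ← WithZero.coe_mul, ← ofAdd_add, add_neg_cancel, mul_one] at this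
      calc v (x.coeff j) ^ p ^ (M - 1 - j)
          = ((ofAdd ((0 : ℤ)) : Multiplicative ℤ) : WithZero (Multiplicative ℤ)) *
            v (x.coeff j) ^ p ^ (M - 1 - j) := by rw [show ((ofAdd ((0:ℤ)) : Multiplicative ℤ) :
              WithZero (Multiplicative ℤ)) = 1 from rfl, one_mul]
      _ ≤ N := this
  constructor
  · intro hx j hj
    exact (key j hj).mp (hx j hj)
  · intro hx j hj
    exact (key j hj).mpr (hx j hj)

end Val

section ValD
set_option linter.unusedSectionVars false
variable {p : ℕ} [hp : Fact p.Prime] {L : Type*} [Field L] [CharP L p]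
  (v : Valuation L (WithZero (Multiplicative ℤ))) (n : ℕ)

/-- Truncation of a Witt vector: zero out all coefficients of index `≥ M`. -/
noncomputable def chop (M : ℕ) (x : WittVector p L) : WittVector p L :=
  WittVector.mk p (fun j => if j < M then x.coeff j else 0)

lemma chop_coeff (M : ℕ) (x : WittVector p L) (j : ℕ) :
    (chop M x).coeff j = if j < M then x.coeff j else 0 :=
  congrFun (WittVector.coeff_mk p _) j

lemma truncate_chop (M : ℕ) (x : WittVector p L) :
    WittVector.truncate M (chop M x) = WittVector.truncate M x := by
  ext j
  rw [WittVector.coeff_truncate, WittVector.coeff_truncate, chop_coeff, if_pos j.2]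

lemma mem_Rng_iff (y : WittVector p L) :
    y ∈ (WittVector.map (Subring.subtype v.integer)).range ↔ ∀ j, v (y.coeff j) ≤ 1 := by
  constructor
  · rintro ⟨z, rfl⟩ j
    rw [WittVector.map_coeff]
    exact (z.coeff j).2
  · intro h
    refine ⟨WittVector.mk p (fun j => ⟨y.coeff j, (v.mem_integer_iff _).2 (h j)⟩), ?_⟩
    ext j
    rw [WittVector.map_coeff, WittVector.coeff_mk]
    rfl

lemma tf_coeff (M : ℕ) (c : L) (w : WittVector p L) (j : ℕ) :
    (WittVector.teichmuller p c * WittVector.map (iterateFrobenius L p (M - 1)) w).coeff j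
      = c ^ p ^ j * w.coeff j ^ p ^ (M - 1) := by
  rw [teichmuller_mul_coeff, WittVector.map_coeff, iterateFrobenius_def]

lemma filW_mem_of_rng {c : L} (hc : v c = ((ofAdd (-(n : ℤ)) : Multiplicative ℤ) :
      WithZero (Multiplicative ℤ))) {M : ℕ} (w x : WittVector p L)
    (hw : WittVector.teichmuller p c * WittVector.map (iterateFrobenius L p (M - 1)) w
      ∈ (WittVector.map (Subring.subtype v.integer)).range)
    (ht : WittVector.truncate M w = WittVector.truncate M x) :
    x ∈ filW p L v M n := by
  rw [mem_filW_iff v n hc]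
  intro j hj
  have h1 := (mem_Rng_iff v _).1 hw j
  rw [tf_coeff] at h1
  have h2 : w.coeff j = x.coeff j := by
    have := congrArg (fun z => TruncatedWittVector.coeff (⟨j, hj⟩ : Fin M) z) ht
    simpa only [WittVector.coeff_truncate] using this
  rwa [h2] at h1

lemma chop_mem_rng {c : L} (hc : v c = ((ofAdd (-(n : ℤ)) : Multiplicative ℤ) :
      WithZero (Multiplicative ℤ))) {M : ℕ} {x : WittVector p L} (hx : x ∈ filW p L v M n) :
    WittVector.teichmuller p c * WittVector.map (iterateFrobenius L p (M - 1)) (chop M x)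
      ∈ (WittVector.map (Subring.subtype v.integer)).range := by
  rw [mem_Rng_iff]
  intro j
  rw [tf_coeff, chop_coeff]
  split_ifs with h
  · exact (mem_filW_iff v n hc x).1 hx j h
  · rw [zero_pow (pow_ne_zero _ hp.out.ne_zero), mul_zero, Valuation.map_zero]
    exact zero_le'

lemma filW_add_mem {c : L} (hc : v c = ((ofAdd (-(n : ℤ)) : Multiplicative ℤ) :
      WithZero (Multiplicative ℤ))) {M : ℕ} {x y : WittVector p L}
    (hx : x ∈ filW p L v M n) (hy : y ∈ filW p L v M n) : x + y ∈ filW p L v M n := by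
  refine filW_mem_of_rng v n hc (chop M x + chop M y) (x + y) ?_ ?_
  · rw [map_add (WittVector.map (iterateFrobenius L p (M - 1))), mul_add]
    exact Subring.add_mem _ (chop_mem_rng v n hc hx) (chop_mem_rng v n hc hy)
  · rw [map_add, map_add, truncate_chop, truncate_chop]

lemma filW_neg_mem {c : L} (hc : v c = ((ofAdd (-(n : ℤ)) : Multiplicative ℤ) :
      WithZero (Multiplicative ℤ))) {M : ℕ} {x : WittVector p L}
    (hx : x ∈ filW p L v M n) : -x ∈ filW p L v M n := by
  refine filW_mem_of_rng v n hc (-(chop M x)) (-x) ?_ ?_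
  · rw [map_neg (WittVector.map (iterateFrobenius L p (M - 1))), mul_neg]
    exact Subring.neg_mem _ (chop_mem_rng v n hc hx)
  · rw [map_neg, map_neg, truncate_chop]

end ValD



section ValE
set_option linter.unusedSectionVars false
variable {p : ℕ} [hp : Fact p.Prime] {L : Type*} [Field L] [CharP L p]
  (v : Valuation L (WithZero (Multiplicative ℤ))) (n : ℕ)

local notation "N" => ((ofAdd (n : ℤ) : Multiplicative ℤ) : WithZero (Multiplicative ℤ))

lemma descend {c : L} (hc : v c = ((ofAdd (-(n : ℤ)) : Multiplicative ℤ) :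
      WithZero (Multiplicative ℤ))) (m k : ℕ) :
    ∀ u y w t : WittVector p L, y ∈ filW p L v (m + k) n →
      Vpow p L k u = y + oneSubF p L w + Vpow p L (m + k) t →
      ∃ u' ∈ filW p L v m n, u - u' ∈ Sgrp p L m := by
  induction k with
  | zero =>
      intro u y w t hy heq
      have hu : u = y + oneSubF p L w + Vpow p L m t := heq
      refine ⟨y, hy, ?_⟩
      have h2 : u - y = oneSubF p L w + Vpow p L m t := by rw [hu]; abel
      rw [h2]
      exact AddSubgroup.add_mem _ (mem_Sgrp_oneSubF p L m w) (mem_Sgrp_Vpow p L m t)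
  | succ k ih =>
      intro u y w t hy heq
      simp only [show m + (k + 1) = m + k + 1 from rfl] at heq hy
      set a := w.coeff 0 with ha
      -- coefficient 0 of the equation
      have h0 : y.coeff 0 + (a - a ^ p) = 0 := by
        have h1 := congrArg (fun z : WittVector p L => z.coeff 0) heq
        simp only [Vpow_succ_apply, WittVector.verschiebung_coeff_zero] at h1
        rw [add_coeff_zero', add_coeff_zero', oneSubF_coeff_zero,
          WittVector.verschiebung_coeff_zero, add_zero] at h1
        exact h1.symm
      obtain ⟨w₁, hw₁⟩ := exists_versch p L (sub_teichmuller_coeff_zero p L w)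
      set z := y + (WittVector.teichmuller p a - WittVector.teichmuller p (a ^ p)) with hz
      have hz0 : z.coeff 0 = 0 := by
        have := map_add (WittVector.constantCoeff (p := p) (R := L)) y
          (WittVector.teichmuller p a - WittVector.teichmuller p (a ^ p))
        have h2 := map_sub (WittVector.constantCoeff (p := p) (R := L))
          (WittVector.teichmuller p a) (WittVector.teichmuller p (a ^ p))
        simp only [WittVector.constantCoeff_apply, WittVector.teichmuller_coeff_zero] at this h2
        show (y + _).coeff 0 = 0
        rw [this, h2]
        exact h0
      obtain ⟨z₁, hz₁⟩ := exists_versch p L hz0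
      -- y₀ = a^p - a and the Artin–Schreier bounds
      have hy0 : y.coeff 0 = a ^ p - a := by linear_combination h0
      have hyb : v (a ^ p - a) ^ p ^ (m + k) ≤ N := by
        have := hy 0 (Nat.succ_pos _)
        rw [hy0] at this
        rwa [show m + k + 1 - 1 - 0 = m + k by omega] at this
      have hAS := filW_AS v n hyb
      -- z ∈ filW (m+k+1)
      have hzfil : z ∈ filW p L v (m + k + 1) n := by
        rw [hz, sub_eq_add_neg, ← add_assoc]
        refine filW_add_mem v n hc (filW_add_mem v n hc hy ?_) (filW_neg_mem v n hc ?_)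
        · exact teichmuller_mem_filW v n (by simpa using hAS.1)
        · exact teichmuller_mem_filW v n (by simpa using hAS.2)
      have hz1fil : z₁ ∈ filW p L v (m + k) n := by
        intro j hj
        have hcoeff : z₁.coeff j = z.coeff (j + 1) := by
          rw [← hz₁, WittVector.verschiebung_coeff_succ]
        have := hzfil (j + 1) (by omega)
        rw [← hcoeff] at this
        have hexp : m + k + 1 - 1 - (j + 1) = m + k - 1 - j := by omega
        rwa [hexp] at this
      -- peel off one Verschiebung
      have heq3 : Vpow p L k u = z₁ + oneSubF p L w₁ + Vpow p L (m + k) t := by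
        apply versch_inj p L
        show Vpow p L (k + 1) u = _
        rw [heq]
        rw [map_add (WittVector.verschiebung : WittVector p L →+ WittVector p L),
          map_add (WittVector.verschiebung : WittVector p L →+ WittVector p L)]
        rw [hz₁, ← oneSubF_versch, hw₁]
        rw [show WittVector.verschiebung (Vpow p L (m + k) t) = Vpow p L (m + k + 1) t from rfl]
        rw [map_sub (oneSubF p L), oneSubF_teichmuller]
        rw [hz]
        abel
      exact ih u z₁ w₁ t hz1fil heq3

end ValE


section Quot
set_option linter.unusedSectionVars false

lemma transQ_mk (m m' : ℕ) (h : m ≤ m') (u : WittVector p K) :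
    transQ p K m m' h (QuotientAddGroup.mk u) = QuotientAddGroup.mk (Vpow p K (m' - m) u) :=
  rfl

lemma mk_eq_mk_of_sub_mem {m : ℕ} {x y : WittVector p K} (h : x - y ∈ Sgrp p K m) :
    (QuotientAddGroup.mk x : Qgrp p K m) = QuotientAddGroup.mk y := by
  apply QuotientAddGroup.eq.2
  rwa [neg_add_eq_sub, ← neg_sub, neg_mem_iff]

lemma sub_mem_of_mk_eq_mk {m : ℕ} {x y : WittVector p K}
    (h : (QuotientAddGroup.mk x : Qgrp p K m) = QuotientAddGroup.mk y) :
    x - y ∈ Sgrp p K m := by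
  have := QuotientAddGroup.eq.1 h
  rwa [neg_add_eq_sub, ← neg_sub, neg_mem_iff] at this

lemma mk_nsmul (m j : ℕ) (x : WittVector p K) :
    (QuotientAddGroup.mk (j • x) : Qgrp p K m) = j • (QuotientAddGroup.mk x : Qgrp p K m) :=
  map_nsmul (QuotientAddGroup.mk' (Sgrp p K m)) j x

instance directedSystemQ : DirectedSystem (Qgrp p K) (fun i j h => transQ p K i j h) where
  map_self := by
    intro i x
    induction x using QuotientAddGroup.induction_on with
    | H u =>
        rw [transQ_mk]
        have : Vpow p K (i - i) u = u := by rw [Nat.sub_self]; rfl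
        rw [this]
  map_map := by
    intro a b c hij hjk x
    induction x using QuotientAddGroup.induction_on with
    | H u =>
        rw [transQ_mk, transQ_mk, transQ_mk, Vpow_Vpow,
          show a - b + (b - c) = a - c by omega]

lemma mk_mem_filQ_of_exists {vv : Valuation K (WithZero (Multiplicative ℤ))} {m n : ℕ}
    {u : WittVector p K} (h : ∃ u' ∈ filW p K vv m n, u - u' ∈ Sgrp p K m) :
    (QuotientAddGroup.mk u : Qgrp p K m) ∈ filQ p K vv m n := by
  obtain ⟨u', hu', hd⟩ := h
  exact ⟨u', hu', (mk_eq_mk_of_sub_mem p K hd).symm⟩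

end Quot


/-- Let `K` be a Henselian discrete valuation field of characteristic
`p > 0`.  Then for every `m ≥ 1` and `n ≥ 0`:
(1) `fil_n H¹_ét(K, ℤ/p^m) = H¹_ét(K, ℤ/p^m) ∩ fil_n H¹_ét(K, ℚ_p/ℤ_p)`: an element of
    `H¹_ét(K, ℤ/p^m)` lies in `fil_n H¹_ét(K, ℚ_p/ℤ_p)` iff it lies in
    `fil_n H¹_ét(K, ℤ/p^m)`;
(2) `fil_n H¹_ét(K, ℤ/p^m) = {p^m}`-torsion of `fil_n H¹_ét(K, ℚ_p/ℤ_p)`: an element of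
    `H¹_ét(K, ℚ_p/ℤ_p)` is killed by `p^m` and lies in `fil_n` iff it is the image of an
    element of `fil_n H¹_ét(K, ℤ/p^m)`. -/
theorem statement_5 (p : ℕ) [hp : Fact p.Prime] (K : Type*) [Field K] [CharP K p]
    (v : Valuation K (WithZero (Multiplicative ℤ)))
    -- the valuation is normalized (in particular discrete):
    (hv : ∀ d : ℤ, ∃ x : K, v x = ((ofAdd d : Multiplicative ℤ) : WithZero (Multiplicative ℤ)))
    -- the valuation ring of `K` is Henselian:
    [hhens : HenselianLocalRing v.integer]
    (m : ℕ) (hm : 1 ≤ m) (n : ℕ) :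
    (∀ c : Qgrp p K m,
        AddCommGroup.DirectLimit.of (Qgrp p K) (transQ p K) m c ∈ filH p K v n ↔
          c ∈ filQ p K v m n) ∧
    (∀ c : Hoo p K,
        (c ∈ filH p K v n ∧ p ^ m • c = 0) ↔
          ∃ d ∈ filQ p K v m n,
            AddCommGroup.DirectLimit.of (Qgrp p K) (transQ p K) m d = c) := by
  obtain ⟨c0, hc0⟩ := hv (-(n : ℤ))
  constructor
  · -- part (1)
    intro c
    constructor
    · rintro ⟨m₁, d, ⟨x, hx, rfl⟩, heq⟩
      obtain ⟨u, rfl⟩ := QuotientAddGroup.mk_surjective c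
      have hmM : m ≤ max m m₁ := le_max_left _ _
      have hm₁M : m₁ ≤ max m m₁ := le_max_right _ _
      have h1 : AddCommGroup.DirectLimit.of (Qgrp p K) (transQ p K) (max m m₁)
          (transQ p K m (max m m₁) hmM (QuotientAddGroup.mk u)
            - transQ p K m₁ (max m m₁) hm₁M (QuotientAddGroup.mk x)) = 0 := by
        rw [map_sub]
        erw [AddCommGroup.DirectLimit.of_f, AddCommGroup.DirectLimit.of_f]
        rw [heq, sub_self]
      obtain ⟨M', hMM', h2⟩ := AddCommGroup.DirectLimit.of.zero_exact _ _ h1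
      have hmM' : m ≤ M' := le_trans hmM hMM'
      have hm₁M' : m₁ ≤ M' := le_trans hm₁M hMM'
      rw [map_sub, sub_eq_zero] at h2
      erw [DirectedSystem.map_map (f := fun i j h => transQ p K i j h) hmM hMM',
        DirectedSystem.map_map (f := fun i j h => transQ p K i j h) hm₁M hMM'] at h2
      rw [transQ_mk, transQ_mk] at h2
      have hsub := sub_mem_of_mk_eq_mk p K h2
      obtain ⟨w, t, hwt⟩ := Sgrp_cases p K hsub
      obtain ⟨k, rfl⟩ := Nat.exists_eq_add_of_le hmM'
      have hY : Vpow p K (m + k - m₁) x ∈ filW p K v (m + k) n := by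
        have := filW_Vpow v n (m + k - m₁) hx
        rwa [show m₁ + (m + k - m₁) = m + k by omega] at this
      have heq2 : Vpow p K k u
          = Vpow p K (m + k - m₁) x + oneSubF p K w + Vpow p K (m + k) t := by
        rw [show m + k - m = k by omega] at hwt
        have h4 := sub_eq_iff_eq_add.1 hwt
        rw [h4]
        abel
      obtain ⟨u', hu', hdiff⟩ := descend v n hc0 m k u _ w t hY heq2
      exact mk_mem_filQ_of_exists p K ⟨u', hu', hdiff⟩
    · intro h
      exact ⟨m, c, h, rfl⟩
  · -- part (2)
    intro c
    constructor
    · rintro ⟨⟨m₁, d, ⟨x, hx, rfl⟩, rfl⟩, htor⟩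
      have hsm : p ^ m • (AddCommGroup.DirectLimit.of (Qgrp p K) (transQ p K) m₁)
          (QuotientAddGroup.mk x)
          = (AddCommGroup.DirectLimit.of (Qgrp p K) (transQ p K) m₁)
            (p ^ m • (QuotientAddGroup.mk x : Qgrp p K m₁)) := (map_nsmul _ _ _).symm
      replace htor := hsm.symm.trans htor
      obtain ⟨M₂, hm₁M₂, h2⟩ := AddCommGroup.DirectLimit.of.zero_exact _ _ htor
      obtain ⟨M, hm₁M, hmM, h3⟩ :
          ∃ (M : ℕ) (h1 : m₁ ≤ M) (_ : m ≤ M),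
            transQ p K m₁ M h1 (p ^ m • (QuotientAddGroup.mk x : Qgrp p K m₁)) = 0 := by
        refine ⟨max M₂ m, le_trans hm₁M₂ (le_max_left _ _), le_max_right _ _, ?_⟩
        erw [← DirectedSystem.map_map (f := fun i j h => transQ p K i j h) hm₁M₂ (le_max_left _ _),
          h2, map_zero]
      obtain ⟨k2, rfl⟩ := Nat.exists_eq_add_of_le hmM
      rw [← mk_nsmul, transQ_mk, map_nsmul] at h3
      set Y := Vpow p K (m + k2 - m₁) x with hYdef
      clear_value Y
      have h4 : p ^ m • Y ∈ Sgrp p K (m + k2) := (QuotientAddGroup.eq_zero_iff _).1 h3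
      obtain ⟨s, hs⟩ := pow_p_smul_sub_mem p K m Y
      have h5 : Vpow p K m Y ∈ Sgrp p K (m + k2) := by
        have : Vpow p K m Y = p ^ m • Y - oneSubF p K s := by rw [hs]; abel
        rw [this]
        exact AddSubgroup.sub_mem _ h4 (mem_Sgrp_oneSubF p K _ s)
      obtain ⟨w, t, hwt⟩ := Sgrp_cases p K h5
      have h6 : oneSubF p K w = Vpow p K m (Y - Vpow p K k2 t) := by
        rw [map_sub, Vpow_Vpow, hwt]
        abel
      obtain ⟨w', hw'⟩ := oneSubF_eq_Vpow p K m w _ h6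
      have h7 : Vpow p K m Y = Vpow p K m (oneSubF p K w' + Vpow p K k2 t) := by
        rw [map_add, Vpow_oneSubF, ← hw', Vpow_Vpow]
        exact hwt
      have h8 : Y = oneSubF p K w' + Vpow p K k2 t := Vpow_inj p K m h7
      have hY : Y ∈ filW p K v (m + k2) n := by
        have h9 := filW_Vpow v n (m + k2 - m₁) hx
        rw [show m₁ + (m + k2 - m₁) = m + k2 by omega] at h9
        rwa [hYdef]
      have heq2 : Vpow p K k2 t
          = Y + oneSubF p K (-w') + Vpow p K (m + k2) 0 := by
        rw [map_neg, map_zero, h8]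
        abel
      obtain ⟨t', ht', hdiff⟩ := descend v n hc0 m k2 t Y (-w') 0 hY heq2
      refine ⟨QuotientAddGroup.mk t', ⟨t', ht', rfl⟩, ?_⟩
      have e1 : (QuotientAddGroup.mk t' : Qgrp p K m) = QuotientAddGroup.mk t :=
        (mk_eq_mk_of_sub_mem p K hdiff).symm
      have e2 : (QuotientAddGroup.mk (Vpow p K k2 t) : Qgrp p K (m + k2))
          = QuotientAddGroup.mk Y := by
        apply mk_eq_mk_of_sub_mem p K
        have : Vpow p K k2 t - Y = oneSubF p K (-w') := by rw [map_neg, h8]; abel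
        rw [this]
        exact mem_Sgrp_oneSubF p K _ _
      rw [e1]
      have e3 : AddCommGroup.DirectLimit.of (Qgrp p K) (transQ p K) m
          (QuotientAddGroup.mk t)
          = AddCommGroup.DirectLimit.of (Qgrp p K) (transQ p K) (m + k2)
            (transQ p K m (m + k2) (by omega) (QuotientAddGroup.mk t)) :=
        (AddCommGroup.DirectLimit.of_f _ _).symm
      rw [e3, transQ_mk, show m + k2 - m = k2 by omega, e2]
      have e4 : (QuotientAddGroup.mk Y : Qgrp p K (m + k2))
          = transQ p K m₁ (m + k2) hm₁M (QuotientAddGroup.mk x) := by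
        rw [transQ_mk, ← hYdef]
      erw [e4, AddCommGroup.DirectLimit.of_f]
    · rintro ⟨d, hd, rfl⟩
      constructor
      · exact ⟨m, d, hd, rfl⟩
      · obtain ⟨x, hx, rfl⟩ := hd
        have hsm : p ^ m • (AddCommGroup.DirectLimit.of (Qgrp p K) (transQ p K) m)
            (QuotientAddGroup.mk x)
            = (AddCommGroup.DirectLimit.of (Qgrp p K) (transQ p K) m)
              (p ^ m • (QuotientAddGroup.mk x : Qgrp p K m)) := (map_nsmul _ _ _).symm
        refine hsm.trans ?_
        rw [← mk_nsmul]
        obtain ⟨s, hs⟩ := pow_p_smul_sub_mem p K m x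
        have hmem : p ^ m • x ∈ Sgrp p K m := by
          have : p ^ m • x = oneSubF p K s + Vpow p K m x := by rw [hs]; abel
          rw [this]
          exact AddSubgroup.add_mem _ (mem_Sgrp_oneSubF p K _ _) (mem_Sgrp_Vpow p K _ _)
        erw [(QuotientAddGroup.eq_zero_iff _).2 hmem, map_zero]
        rfl
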